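/- Let (X,d,μ) be an unbounded metric measure space, a ∈ X, p > 1, and (Ẋ, d̂_a, μ̂_a) its sphericalization with dμ̂_a(x) = dμ(x)/(1+d(x,a))^{2p}. Let Ω ⊂ X be open and u ∈ D^p(Ω,d,μ) (u measurable with an upper gradient in L^p). Then u ∈ D^p(Ω, d̂_a, μ̂_a), the minimal p-weak upper gradients are related by ĝ_u(x) = g_u(x)(1+d(x,a))^2 for a.e. x ∈ Ω, and the p-energies coincide: ∫_Ω g_u^p dμ = ∫_Ω ĝ_u^p dμ̂_a. -/

import Mathlib

open MeasureTheory Metric Set ENNReal Filter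

/-- A (nonconstant, compact, rectifiable) curve with respect to a distance
function `D`, parameterized by arc length on `[0, len]`
(so that it is `1`-Lipschitz with respect to `D`). -/
structure CurveD (Y : Type*) (D : Y → Y → ℝ) where
  toFun : ℝ → Y
  len : ℝ
  len_pos : 0 < len
  lip : ∀ s ∈ Set.Icc (0:ℝ) len, ∀ t ∈ Set.Icc (0:ℝ) len, D (toFun s) (toFun t) ≤ |s - t|

/-- The curve lies in the set `Ω`. -/
def CurveD.inSet {Y : Type*} {D : Y → Y → ℝ} (γ : CurveD Y D) (Ω : Set Y) : Prop :=
  ∀ t ∈ Set.Icc (0:ℝ) γ.len, γ.toFun t ∈ Ω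

/-- Line integral `∫_γ ρ ds̃`, where the arc length element is `ds̃ = w ds`. -/
noncomputable def lineInt {Y : Type*} {D : Y → Y → ℝ} (γ : CurveD Y D) (ρ w : Y → ℝ≥0∞) : ℝ≥0∞ :=
  ∫⁻ t in Set.Icc (0:ℝ) γ.len, ρ (γ.toFun t) * w (γ.toFun t)

/-- The `p`-modulus of a curve family `Γ`, with energy measure `μ` and arc
length weighted by `w`. -/
noncomputable def pMod {Y : Type*} [MeasurableSpace Y] {D : Y → Y → ℝ} (p : ℝ) (μ : Measure Y)
    (w : Y → ℝ≥0∞) (Γ : Set (CurveD Y D)) : ℝ≥0∞ :=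
  ⨅ (ρ : Y → ℝ≥0∞) (_ : Measurable ρ) (_ : ∀ γ ∈ Γ, 1 ≤ lineInt γ ρ w), ∫⁻ y, ρ y ^ p ∂μ

/-- The absolute value of an extended real, as an element of `[0,∞]`. -/
noncomputable def eAbs (x : EReal) : ℝ≥0∞ :=
  if max x (-x) = (⊤ : EReal) then ⊤ else ENNReal.ofReal (max x (-x)).toReal

/-- `g` is an upper gradient of `u : Ω → [-∞,∞]` (arc length weighted by `w`). -/
def IsUpperGradientOn {Y : Type*} (D : Y → Y → ℝ) (w : Y → ℝ≥0∞) (Ω : Set Y)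
    (u : Y → EReal) (g : Y → ℝ≥0∞) : Prop :=
  ∀ γ : CurveD Y D, γ.inSet Ω →
    eAbs (u (γ.toFun γ.len) - u (γ.toFun 0)) ≤ lineInt γ g w

/-- `g` is a `p`-weak upper gradient of `u` in `Ω`: the upper gradient
inequality holds along `p`-almost every curve. -/
def IsPWUGOn {Y : Type*} [MeasurableSpace Y] (D : Y → Y → ℝ) (p : ℝ) (μ : Measure Y)
    (w : Y → ℝ≥0∞) (Ω : Set Y) (u : Y → EReal) (g : Y → ℝ≥0∞) : Prop :=
  ∃ Γ₀ : Set (CurveD Y D), pMod p μ w Γ₀ = 0 ∧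
    ∀ γ : CurveD Y D, γ.inSet Ω → γ ∉ Γ₀ →
      eAbs (u (γ.toFun γ.len) - u (γ.toFun 0)) ≤ lineInt γ g w

/-- `g` has locally finite `p`-energy in `Ω`. -/
def IsLocLp {Y : Type*} [MetricSpace Y] [MeasurableSpace Y] (p : ℝ) (μ : Measure Y)
    (Ω : Set Y) (g : Y → ℝ≥0∞) : Prop :=
  ∀ x ∈ Ω, ∃ r > (0:ℝ), ∫⁻ y in Ω ∩ Metric.ball x r, g y ^ p ∂μ < ⊤

/-- `g` is the minimal `p`-weak upper gradient of `u` in `Ω`. -/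
def IsMinimalPWUGOn {Y : Type*} [MetricSpace Y] [MeasurableSpace Y] (D : Y → Y → ℝ) (p : ℝ)
    (μ : Measure Y) (w : Y → ℝ≥0∞) (Ω : Set Y) (u : Y → EReal) (g : Y → ℝ≥0∞) : Prop :=
  IsPWUGOn D p μ w Ω u g ∧ IsLocLp p μ Ω g ∧
    ∀ h : Y → ℝ≥0∞, IsPWUGOn D p μ w Ω u h → IsLocLp p μ Ω h →
      ∀ᵐ x ∂(μ.restrict Ω), g x ≤ h x

/-- The `p`-th power of the Newtonian norm of `u` on `Ω`. -/
noncomputable def NpNormP {Y : Type*} [MeasurableSpace Y] (D : Y → Y → ℝ) (p : ℝ)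
    (μ : Measure Y) (w : Y → ℝ≥0∞) (Ω : Set Y) (u : Y → EReal) : ℝ≥0∞ :=
  (∫⁻ x in Ω, eAbs (u x) ^ p ∂μ) +
    ⨅ (g : Y → ℝ≥0∞) (_ : IsUpperGradientOn D w Ω u g), ∫⁻ x in Ω, g x ^ p ∂μ

/-- The Sobolev capacity of `E`. -/
noncomputable def sobCap {Y : Type*} [MeasurableSpace Y] (D : Y → Y → ℝ) (p : ℝ)
    (μ : Measure Y) (w : Y → ℝ≥0∞) (E : Set Y) : ℝ≥0∞ :=
  ⨅ (u : Y → EReal) (_ : ∀ x ∈ E, 1 ≤ u x), NpNormP D p μ w Set.univ u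

/-- The sphericalized arc length weight `ds̃ = ds/(1+d(x,a))²`. -/
noncomputable def hatW {X : Type*} [MetricSpace X] (a : X) : X → ℝ≥0∞ :=
  fun x => ENNReal.ofReal ((1 + dist x a) ^ 2)⁻¹

/-- The sphericalization measure `dμ̂ₐ = dμ/(1+d(x,a))^{2p}`. -/
noncomputable def muHat {X : Type*} [MetricSpace X] [MeasurableSpace X] (μ : Measure X)
    (a : X) (p : ℝ) : Measure X :=
  μ.withDensity fun x => ENNReal.ofReal ((1 + dist x a) ^ (2 * p))⁻¹

/-- A `q`-Poincaré inequality for `(X,d,μ)`. -/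
def PoincareIneqP {X : Type*} [MetricSpace X] [MeasurableSpace X] (q : ℝ) (μ : Measure X) : Prop :=
  ∃ C > (0:ℝ), ∃ lam ≥ (1:ℝ), ∀ (u : X → ℝ) (g : X → ℝ≥0∞), Measurable u → Measurable g →
    MeasureTheory.LocallyIntegrable u μ →
    IsUpperGradientOn dist (fun _ => 1) Set.univ (fun x => (u x : EReal)) g →
    ∀ (x : X) (r : ℝ), 0 < r →
      ⨍⁻ y in Metric.ball x r, ENNReal.ofReal |u y - ⨍ z in Metric.ball x r, u z ∂μ| ∂μ ≤
        ENNReal.ofReal (C * Metric.diam (Metric.ball x r)) *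
          (⨍⁻ y in Metric.ball x (lam * r), g y ^ q ∂μ) ^ (1/q)

/-- `μ` is doubling and all balls have positive finite measure. -/
def DoublingMeas {X : Type*} [MetricSpace X] [MeasurableSpace X] (μ : Measure X) : Prop :=
  (∀ (x : X) (r : ℝ), 0 < r → 0 < μ (Metric.ball x r) ∧ μ (Metric.ball x r) < ⊤) ∧
    ∃ C > (0:ℝ), ∀ (x : X) (r : ℝ), 0 < r →
      μ (Metric.ball x (2 * r)) ≤ ENNReal.ofReal C * μ (Metric.ball x r)

/-- `μ` is Ahlfors `Q`-regular. -/
def AhlforsRegular {X : Type*} [MetricSpace X] [MeasurableSpace X] (μ : Measure X) (Q : ℝ) : Prop :=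
  ∃ C > (0:ℝ), ∀ (x : X) (r : ℝ), 0 < r →
    ENNReal.ofReal (C⁻¹ * r ^ Q) ≤ μ (Metric.ball x r) ∧
      μ (Metric.ball x r) ≤ ENNReal.ofReal (C * r ^ Q)


set_option linter.unusedSectionVars false
section Aux
variable {X : Type*} [MetricSpace X] [MeasurableSpace X] [BorelSpace X]

lemma base_pos (a x : X) : (0:ℝ) < ((1 + dist x a) ^ 2)⁻¹ := by positivity

lemma hatW_ne_zero (a x : X) : hatW a x ≠ 0 :=
  (ENNReal.ofReal_pos.mpr (base_pos a x)).ne'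

lemma hatW_ne_top (a x : X) : hatW a x ≠ ⊤ := ENNReal.ofReal_ne_top

lemma hatW_meas (a : X) : Measurable (hatW a) :=
  (((continuous_const.add (continuous_id.dist continuous_const)).pow 2).inv₀
    (fun x => (by positivity : (0:ℝ) < (1 + dist x a) ^ 2).ne')).measurable.ennreal_ofReal

lemma hatW_inv (a x : X) : (hatW a x)⁻¹ = ENNReal.ofReal ((1 + dist x a) ^ 2) := by
  rw [hatW, ENNReal.ofReal_inv_of_pos (by positivity), inv_inv]

lemma hatW_mul_inv (a x : X) : hatW a x * (hatW a x)⁻¹ = 1 :=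
  ENNReal.mul_inv_cancel (hatW_ne_zero a x) (hatW_ne_top a x)

lemma hatW_rpow (a : X) (p : ℝ) (x : X) :
    hatW a x ^ p = ENNReal.ofReal ((1 + dist x a) ^ (2 * p))⁻¹ := by
  have h1 : (0:ℝ) < 1 + dist x a := by positivity
  rw [hatW, ENNReal.ofReal_rpow_of_pos (base_pos a x)]
  congr 1
  rw [Real.inv_rpow (by positivity), ← Real.rpow_natCast (1 + dist x a) 2,
    ← Real.rpow_mul h1.le]
  norm_num

lemma hatW_rpow_ne_zero (a : X) {p : ℝ} (x : X) : hatW a x ^ p ≠ 0 :=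
  (ENNReal.rpow_pos (lt_of_le_of_ne (zero_le) (hatW_ne_zero a x).symm)
    (hatW_ne_top a x)).ne'

lemma hatW_rpow_ne_top (a : X) {p : ℝ} (hp : 0 ≤ p) (x : X) : hatW a x ^ p ≠ ⊤ :=
  ENNReal.rpow_ne_top_of_nonneg hp (hatW_ne_top a x)

lemma muHat_eq (μ : Measure X) (a : X) (p : ℝ) :
    muHat μ a p = μ.withDensity (fun x => hatW a x ^ p) := by
  unfold muHat
  congr 1
  funext x
  rw [hatW_rpow]

lemma lineInt_mul_inv (a : X) (γ : CurveD X dist) (ρ : X → ℝ≥0∞) :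
    lineInt γ (fun x => ρ x * (hatW a x)⁻¹) (hatW a) = lineInt γ ρ (fun _ => 1) := by
  refine lintegral_congr fun t => ?_
  simp [mul_assoc, ENNReal.inv_mul_cancel (hatW_ne_zero a _) (hatW_ne_top a _)]

lemma lineInt_mul (a : X) (γ : CurveD X dist) (ρ : X → ℝ≥0∞) :
    lineInt γ (fun x => ρ x * hatW a x) (fun _ => 1) = lineInt γ ρ (hatW a) := by
  refine lintegral_congr fun t => ?_
  simp

lemma density_cancel (a : X) {p : ℝ} (hp : 0 ≤ p) (h : X → ℝ≥0∞) (x : X) :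
    hatW a x ^ p * (h x * (hatW a x)⁻¹) ^ p = h x ^ p := by
  rw [ENNReal.mul_rpow_of_nonneg _ _ hp, ENNReal.inv_rpow, ← mul_assoc,
    mul_comm (hatW a x ^ p), mul_assoc,
    ENNReal.mul_inv_cancel (hatW_rpow_ne_zero a x) (hatW_rpow_ne_top a hp x), mul_one]

lemma density_mul (a : X) {p : ℝ} (hp : 0 ≤ p) (h : X → ℝ≥0∞) (x : X) :
    hatW a x ^ p * h x ^ p = (h x * hatW a x) ^ p := by
  rw [ENNReal.mul_rpow_of_nonneg _ _ hp, mul_comm]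

lemma energy_inv (μ : Measure X) (a : X) {p : ℝ} (hp : 0 ≤ p) (h : X → ℝ≥0∞)
    {s : Set X} (hs : MeasurableSet s) :
    ∫⁻ x in s, (h x * (hatW a x)⁻¹) ^ p ∂(muHat μ a p) = ∫⁻ x in s, h x ^ p ∂μ := by
  rw [muHat_eq, restrict_withDensity hs,
    lintegral_withDensity_eq_lintegral_mul_non_measurable _ ((hatW_meas a).pow_const p)
      (Filter.Eventually.of_forall fun x =>
        lt_of_le_of_ne le_top (hatW_rpow_ne_top a hp x))]
  exact lintegral_congr fun x => density_cancel a hp h x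

lemma energy_inv_univ (μ : Measure X) (a : X) {p : ℝ} (hp : 0 ≤ p) (h : X → ℝ≥0∞) :
    ∫⁻ x, (h x * (hatW a x)⁻¹) ^ p ∂(muHat μ a p) = ∫⁻ x, h x ^ p ∂μ := by
  rw [muHat_eq,
    lintegral_withDensity_eq_lintegral_mul_non_measurable _ ((hatW_meas a).pow_const p)
      (Filter.Eventually.of_forall fun x =>
        lt_of_le_of_ne le_top (hatW_rpow_ne_top a hp x))]
  exact lintegral_congr fun x => density_cancel a hp h x

lemma energy_mul (μ : Measure X) (a : X) {p : ℝ} (hp : 0 ≤ p) (h : X → ℝ≥0∞)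
    {s : Set X} (hs : MeasurableSet s) :
    ∫⁻ x in s, (h x * hatW a x) ^ p ∂μ = ∫⁻ x in s, h x ^ p ∂(muHat μ a p) := by
  rw [muHat_eq, restrict_withDensity hs,
    lintegral_withDensity_eq_lintegral_mul_non_measurable _ ((hatW_meas a).pow_const p)
      (Filter.Eventually.of_forall fun x =>
        lt_of_le_of_ne le_top (hatW_rpow_ne_top a hp x))]
  exact lintegral_congr fun x => (density_mul a hp h x).symm

lemma energy_mul_univ (μ : Measure X) (a : X) {p : ℝ} (hp : 0 ≤ p) (h : X → ℝ≥0∞) :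
    ∫⁻ x, (h x * hatW a x) ^ p ∂μ = ∫⁻ x, h x ^ p ∂(muHat μ a p) := by
  rw [muHat_eq,
    lintegral_withDensity_eq_lintegral_mul_non_measurable _ ((hatW_meas a).pow_const p)
      (Filter.Eventually.of_forall fun x =>
        lt_of_le_of_ne le_top (hatW_rpow_ne_top a hp x))]
  exact lintegral_congr fun x => (density_mul a hp h x).symm

lemma pMod_eq (μ : Measure X) (a : X) {p : ℝ} (hp : 0 ≤ p) (Γ : Set (CurveD X dist)) :
    pMod p (muHat μ a p) (hatW a) Γ = pMod p μ (fun _ => 1) Γ := by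
  refine le_antisymm ?_ ?_
  · refine le_iInf fun ρ => le_iInf fun hm => le_iInf fun hadm => ?_
    have hadm' : ∀ γ ∈ Γ, 1 ≤ lineInt γ (fun x => ρ x * (hatW a x)⁻¹) (hatW a) := by
      intro γ hγ
      rw [lineInt_mul_inv]
      exact hadm γ hγ
    have key : (∫⁻ y, (ρ y * (hatW a y)⁻¹) ^ p ∂(muHat μ a p)) = ∫⁻ y, ρ y ^ p ∂μ :=
      energy_inv_univ μ a hp ρ
    calc pMod p (muHat μ a p) (hatW a) Γ
        ≤ ∫⁻ y, (ρ y * (hatW a y)⁻¹) ^ p ∂(muHat μ a p) :=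
          iInf_le_of_le (fun x => ρ x * (hatW a x)⁻¹)
            (iInf_le_of_le (hm.mul (hatW_meas a).inv) (iInf_le_of_le hadm' le_rfl))
      _ = ∫⁻ y, ρ y ^ p ∂μ := key
  · refine le_iInf fun ρ => le_iInf fun hm => le_iInf fun hadm => ?_
    have hadm' : ∀ γ ∈ Γ, 1 ≤ lineInt γ (fun x => ρ x * hatW a x) (fun _ => 1) := by
      intro γ hγ
      rw [lineInt_mul]
      exact hadm γ hγ
    have key : (∫⁻ y, (ρ y * hatW a y) ^ p ∂μ) = ∫⁻ y, ρ y ^ p ∂(muHat μ a p) :=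
      energy_mul_univ μ a hp ρ
    calc pMod p μ (fun _ => 1) Γ
        ≤ ∫⁻ y, (ρ y * hatW a y) ^ p ∂μ :=
          iInf_le_of_le (fun x => ρ x * hatW a x)
            (iInf_le_of_le (hm.mul (hatW_meas a)) (iInf_le_of_le hadm' le_rfl))
      _ = ∫⁻ y, ρ y ^ p ∂(muHat μ a p) := key

lemma pwug_fwd (μ : Measure X) (a : X) {p : ℝ} (hp : 0 ≤ p) {Ω : Set X} {u : X → EReal}
    {h : X → ℝ≥0∞} (H : IsPWUGOn dist p μ (fun _ => 1) Ω u h) :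
    IsPWUGOn dist p (muHat μ a p) (hatW a) Ω u (fun x => h x * (hatW a x)⁻¹) := by
  obtain ⟨Γ₀, hΓ, hineq⟩ := H
  refine ⟨Γ₀, by rw [pMod_eq μ a hp]; exact hΓ, fun γ hin hni => ?_⟩
  rw [lineInt_mul_inv]
  exact hineq γ hin hni

lemma pwug_bwd (μ : Measure X) (a : X) {p : ℝ} (hp : 0 ≤ p) {Ω : Set X} {u : X → EReal}
    {h : X → ℝ≥0∞} (H : IsPWUGOn dist p (muHat μ a p) (hatW a) Ω u h) :
    IsPWUGOn dist p μ (fun _ => 1) Ω u (fun x => h x * hatW a x) := by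
  obtain ⟨Γ₀, hΓ, hineq⟩ := H
  refine ⟨Γ₀, by rw [← pMod_eq μ a hp]; exact hΓ, fun γ hin hni => ?_⟩
  rw [lineInt_mul]
  exact hineq γ hin hni

lemma locLp_fwd (μ : Measure X) (a : X) {p : ℝ} (hp : 0 ≤ p) {Ω : Set X} (hΩ : IsOpen Ω)
    {h : X → ℝ≥0∞} (H : IsLocLp p μ Ω h) :
    IsLocLp p (muHat μ a p) Ω (fun x => h x * (hatW a x)⁻¹) := by
  intro x hx
  obtain ⟨r, hr, hfin⟩ := H x hx
  refine ⟨r, hr, ?_⟩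
  rw [energy_inv μ a hp h (hΩ.measurableSet.inter measurableSet_ball)]
  exact hfin

lemma locLp_bwd (μ : Measure X) (a : X) {p : ℝ} (hp : 0 ≤ p) {Ω : Set X} (hΩ : IsOpen Ω)
    {h : X → ℝ≥0∞} (H : IsLocLp p (muHat μ a p) Ω h) :
    IsLocLp p μ Ω (fun x => h x * hatW a x) := by
  intro x hx
  obtain ⟨r, hr, hfin⟩ := H x hx
  refine ⟨r, hr, ?_⟩
  rw [energy_mul μ a hp h (hΩ.measurableSet.inter measurableSet_ball)]
  exact hfin

lemma ae_transfer (μ : Measure X) (a : X) {p : ℝ} (hp : 0 ≤ p) {Ω : Set X}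
    (hΩ : MeasurableSet Ω) (P : X → Prop) :
    (∀ᵐ x ∂(muHat μ a p).restrict Ω, P x) ↔ ∀ᵐ x ∂μ.restrict Ω, P x := by
  rw [muHat_eq, restrict_withDensity hΩ, ae_withDensity_iff ((hatW_meas a).pow_const p)]
  constructor
  · intro H
    filter_upwards [H] with x hx
    exact hx (hatW_rpow_ne_zero a x)
  · intro H
    filter_upwards [H] with x hx _
    exact hx

end Aux

/-- If `u ∈ D^p(Ω,d,μ)` then `u ∈ D^p(Ω,d̂_a,μ̂_a)`, the minimal `p`-weak
upper gradients satisfy `gh_u(x) = g_u(x)(1+d(x,a))²` a.e., and the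
`p`-energies coincide: `∫_Ω g_u^p dμ = ∫_Ω gh_u^p dμ̂_a`. -/

theorem minimal_pwug_sphericalization {X : Type*} [MetricSpace X] [MeasurableSpace X]
    [BorelSpace X] (μ : Measure X) (a : X) (p : ℝ) (hp : 1 < p)
    (hunb : ¬ Bornology.IsBounded (Set.univ : Set X))
    (Ω : Set X) (hΩ : IsOpen Ω) (u : X → EReal)
    (hDp : ∃ g₀ : X → ℝ≥0∞, Measurable g₀ ∧
      IsUpperGradientOn dist (fun _ => 1) Ω u g₀ ∧ ∫⁻ x in Ω, g₀ x ^ p ∂μ < ⊤)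
    (g gh : X → ℝ≥0∞)
    (hg : IsMinimalPWUGOn dist p μ (fun _ => 1) Ω u g)
    (hgh : IsMinimalPWUGOn dist p (muHat μ a p) (hatW a) Ω u gh) :
    (∃ gh0 : X → ℝ≥0∞, Measurable gh0 ∧ IsUpperGradientOn dist (hatW a) Ω u gh0 ∧
      ∫⁻ x in Ω, gh0 x ^ p ∂(muHat μ a p) < ⊤) ∧
    (∀ᵐ x ∂(μ.restrict Ω), gh x = g x * ENNReal.ofReal ((1 + dist x a) ^ 2)) ∧
    ∫⁻ x in Ω, g x ^ p ∂μ = ∫⁻ x in Ω, gh x ^ p ∂(muHat μ a p) := by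
  have hp0 : (0:ℝ) ≤ p := le_of_lt (lt_trans one_pos hp)
  have hΩm : MeasurableSet Ω := hΩ.measurableSet
  obtain ⟨hgP, hgL, hgMin⟩ := hg
  obtain ⟨hghP, hghL, hghMin⟩ := hgh
  -- gh ≤ g * (hatW)⁻¹ a.e.
  have h1 : ∀ᵐ x ∂(μ.restrict Ω), gh x ≤ g x * (hatW a x)⁻¹ := by
    rw [← ae_transfer μ a hp0 hΩm]
    exact hghMin _ (pwug_fwd μ a hp0 hgP) (locLp_fwd μ a hp0 hΩ hgL)
  -- g ≤ gh * hatW a.e.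
  have h2 : ∀ᵐ x ∂(μ.restrict Ω), g x ≤ gh x * hatW a x :=
    hgMin _ (pwug_bwd μ a hp0 hghP) (locLp_bwd μ a hp0 hΩ hghL)
  have hae : ∀ᵐ x ∂(μ.restrict Ω), gh x = g x * (hatW a x)⁻¹ := by
    filter_upwards [h1, h2] with x hx1 hx2
    refine le_antisymm hx1 ?_
    calc g x * (hatW a x)⁻¹ ≤ gh x * hatW a x * (hatW a x)⁻¹ :=
          mul_le_mul_left hx2 _
      _ = gh x := by rw [mul_assoc, hatW_mul_inv, mul_one]
  refine ⟨?_, ?_, ?_⟩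
  · obtain ⟨g₀, hg₀m, hg₀ug, hg₀fin⟩ := hDp
    refine ⟨fun x => g₀ x * (hatW a x)⁻¹, hg₀m.mul (hatW_meas a).inv, ?_, ?_⟩
    · intro γ hγ
      rw [lineInt_mul_inv]
      exact hg₀ug γ hγ
    · rw [energy_inv μ a hp0 g₀ hΩm]
      exact hg₀fin
  · filter_upwards [hae] with x hx
    rw [hx, hatW_inv]
  · have hae' : ∀ᵐ x ∂(muHat μ a p).restrict Ω, gh x = g x * (hatW a x)⁻¹ :=
      (ae_transfer μ a hp0 hΩm _).mpr hae
    have : ∫⁻ x in Ω, gh x ^ p ∂(muHat μ a p)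
        = ∫⁻ x in Ω, (g x * (hatW a x)⁻¹) ^ p ∂(muHat μ a p) := by
      refine lintegral_congr_ae ?_
      filter_upwards [hae'] with x hx
      rw [hx]
    rw [this, energy_inv μ a hp0 g hΩm]
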